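/- Let m be a real number with 0 < m ≤ 1 and define R_m(k₁, k₂) = 4·(cos²(k₁/2)·sin²(k₂/2) + sin²(k₁/2)·cos²(k₂/2))^(3/2) / (m·(sin²(k₁/2) + sin²(k₂/2))). Then for every fixed k₂ with 2·arccos(√(m/2)) ≤ k₂ ≤ 2·arccos(m/2), the function k₁ ↦ R_m(k₁, k₂) is strictly decreasing on the interval [0, π]. -/
import Mathlib


/-- Curvature radius `R_m(k₁,k₂)` of the level curve `{2 cos(k₁/2) cos(k₂/2) = m}`
(Proposition 8.1). -/
noncomputable def curvRadius (m k₁ k₂ : ℝ) : ℝ :=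
  4 * (Real.cos (k₁ / 2) ^ 2 * Real.sin (k₂ / 2) ^ 2
        + Real.sin (k₁ / 2) ^ 2 * Real.cos (k₂ / 2) ^ 2) ^ ((3 : ℝ) / 2) /
    (m * (Real.sin (k₁ / 2) ^ 2 + Real.sin (k₂ / 2) ^ 2))

/-- For `0 < m ≤ 1` and `k₂` in the stated interval, the curvature radius
`k₁ ↦ R_m(k₁, k₂)` is strictly decreasing on `[0, π]` (Proposition 8.1). -/
theorem curvRadius_strictAntiOn
    (m : ℝ) (hm0 : 0 < m) (hm1 : m ≤ 1) (k₂ : ℝ)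
    (hk₂l : 2 * Real.arccos (Real.sqrt (m / 2)) ≤ k₂)
    (hk₂u : k₂ ≤ 2 * Real.arccos (m / 2)) :
    StrictAntiOn (fun k₁ => curvRadius m k₁ k₂) (Set.Icc 0 Real.pi) := by
  -- basic facts about k₂/2
  have hm2 : (0:ℝ) ≤ m / 2 := by linarith
  have hm2le : m / 2 ≤ 1 := by linarith
  have hsq2 : Real.sqrt (m / 2) ≤ 1 := by
    rw [show (1:ℝ) = Real.sqrt 1 by simp]
    exact Real.sqrt_le_sqrt (by linarith)
  have hk2half_lo : Real.arccos (Real.sqrt (m / 2)) ≤ k₂ / 2 := by linarith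
  have hk2half_hi : k₂ / 2 ≤ Real.arccos (m / 2) := by linarith
  have hk2_nonneg : 0 ≤ k₂ / 2 := le_trans (Real.arccos_nonneg _) hk2half_lo
  have hk2_le_pi : k₂ / 2 ≤ Real.pi := le_trans hk2half_hi (Real.arccos_le_pi _)
  -- cos(k₂/2) ∈ [m/2, √(m/2)]
  have hcos_ge : m / 2 ≤ Real.cos (k₂ / 2) := by
    have := Real.cos_le_cos_of_nonneg_of_le_pi hk2_nonneg (Real.arccos_le_pi (m/2)) hk2half_hi
    rwa [Real.cos_arccos (by linarith) hm2le] at this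
  have hcos_le : Real.cos (k₂ / 2) ≤ Real.sqrt (m / 2) := by
    have := Real.cos_le_cos_of_nonneg_of_le_pi (Real.arccos_nonneg _) hk2_le_pi hk2half_lo
    rwa [Real.cos_arccos (by linarith [Real.sqrt_nonneg (m/2)]) hsq2] at this
  have hcos_pos : 0 < Real.cos (k₂ / 2) := lt_of_lt_of_le (by linarith) hcos_ge
  set c := Real.cos (k₂ / 2) ^ 2 with hc
  set s := Real.sin (k₂ / 2) ^ 2 with hs
  have hc_pos : 0 < c := by positivity
  have hc_le : c ≤ m / 2 := by
    have : Real.cos (k₂ / 2) ^ 2 ≤ Real.sqrt (m / 2) ^ 2 :=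
      pow_le_pow_left₀ hcos_pos.le hcos_le 2
    rwa [Real.sq_sqrt hm2] at this
  have hsc : s + c = 1 := by rw [hs, hc]; exact Real.sin_sq_add_cos_sq _
  have hcs : c ≤ s := by linarith
  have hs_pos : 0 < s := lt_of_lt_of_le hc_pos hcs
  -- main argument
  intro a ha b hb hab
  simp only [curvRadius]
  set xa := Real.sin (a / 2) ^ 2 with hxa
  set xb := Real.sin (b / 2) ^ 2 with hxb
  have hxa0 : 0 ≤ xa := by positivity
  have hxb1 : xb ≤ 1 := by rw [hxb]; exact Real.sin_sq_le_one _
  have hxab : xa < xb := by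
    have h1 : Real.sin (a / 2) < Real.sin (b / 2) := by
      apply Real.sin_lt_sin_of_lt_of_le_pi_div_two (by linarith [ha.1, Real.pi_pos])
        (by linarith [hb.2]) (by linarith)
    have h0 : 0 ≤ Real.sin (a / 2) :=
      Real.sin_nonneg_of_nonneg_of_le_pi (by linarith [ha.1]) (by linarith [ha.2, Real.pi_pos])
    exact pow_lt_pow_left₀ h1 h0 (by norm_num)
  -- rewrite cos² = 1 - sin²
  have hca : Real.cos (a / 2) ^ 2 = 1 - xa := by rw [hxa, Real.cos_sq']
  have hcb : Real.cos (b / 2) ^ 2 = 1 - xb := by rw [hxb, Real.cos_sq']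
  rw [hca, hcb]
  set Ba := (1 - xa) * s + xa * c with hBa
  set Bb := (1 - xb) * s + xb * c with hBb
  have h1 : (0:ℝ) ≤ (1 - xb) * (s - c) :=
    mul_nonneg (by linarith) (by linarith)
  have h2 : (0:ℝ) ≤ (xb - xa) * (s - c) :=
    mul_nonneg (by linarith) (by linarith)
  have e1 : Bb = c + (1 - xb) * (s - c) := by rw [hBb]; ring
  have e2 : Ba - Bb = (xb - xa) * (s - c) := by rw [hBa, hBb]; ring
  have hBb_pos : 0 < Bb := by rw [e1]; linarith
  have hBba : Bb ≤ Ba := by linarith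
  have hBa_pos : 0 < Ba := lt_of_lt_of_le hBb_pos hBba
  have key : Bb ^ ((3:ℝ)/2) * (xa + s) < Ba ^ ((3:ℝ)/2) * (xb + s) := by
    calc Bb ^ ((3:ℝ)/2) * (xa + s) ≤ Ba ^ ((3:ℝ)/2) * (xa + s) := by
          apply mul_le_mul_of_nonneg_right
            (Real.rpow_le_rpow hBb_pos.le hBba (by norm_num)) (by linarith)
      _ < Ba ^ ((3:ℝ)/2) * (xb + s) := by
          apply mul_lt_mul_of_pos_left (by linarith) (Real.rpow_pos_of_pos hBa_pos _)
  rw [div_lt_div_iff₀ (by positivity) (by positivity), ← hs,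
    show 4 * Bb ^ ((3:ℝ)/2) * (m * (xa + s)) = 4 * m * (Bb ^ ((3:ℝ)/2) * (xa + s)) from by ring,
    show 4 * Ba ^ ((3:ℝ)/2) * (m * (xb + s)) = 4 * m * (Ba ^ ((3:ℝ)/2) * (xb + s)) from by ring]
  exact mul_lt_mul_of_pos_left key (by linarith)
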